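/- arXiv:1009.3089 — 9 statements merged into one kernel-verified Lean document; each statement's English description precedes it below -/
import Mathlib

section
/- Let a, b, c be unit vectors in Euclidean 3-space such that b ≠ a, b ≠ -a, c ≠ a, c ≠ -a. Then |det(a,b,c)| = sin(∠_a(b,c)) · sin(dS(a,b)) · sin(dS(a,c)), where det(a,b,c) is the determinant of the 3×3 matrix with rows a, b, c. -/
open RealInnerProductSpace

/-- The determinant of the 3×3 matrix whose rows are `a`, `b`, `c`. -/
noncomputable def det3 (a b c : EuclideanSpace ℝ (Fin 3)) : ℝ :=
  Matrix.det !![a 0, a 1, a 2; b 0, b 1, b 2; c 0, c 1, c 2]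

/-- The spherical distance between two unit vectors. -/
noncomputable def sphDist (x y : EuclideanSpace ℝ (Fin 3)) : ℝ :=
  Real.arccos ⟪x, y⟫

/-- The tangential projection of `b` at `a`. -/
noncomputable def tproj (a b : EuclideanSpace ℝ (Fin 3)) : EuclideanSpace ℝ (Fin 3) :=
  b - ⟪b, a⟫ • a

/-- The spherical angle at `a` between `b` and `c`. -/
noncomputable def sphAngle (a b c : EuclideanSpace ℝ (Fin 3)) : ℝ :=
  InnerProductGeometry.angle (tproj a b) (tproj a c)

theorem abs_det_eq_sin_angle_mul_sin_dist_mul_sin_dist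
    (a b c : EuclideanSpace ℝ (Fin 3))
    (ha : ‖a‖ = 1) (hb : ‖b‖ = 1) (hc : ‖c‖ = 1)
    (hba : b ≠ a) (hba' : b ≠ -a) (hca : c ≠ a) (hca' : c ≠ -a) :
    |det3 a b c| =
      Real.sin (sphAngle a b c) * Real.sin (sphDist a b) * Real.sin (sphDist a c) := by
  have hA : a 0 ^ 2 + a 1 ^ 2 + a 2 ^ 2 = 1 := by
    have := real_inner_self_eq_norm_sq a
    rw [ha] at this
    simp only [PiLp.inner_apply, RCLike.inner_apply, conj_trivial, Fin.sum_univ_three] at this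
    linear_combination this
  have hB : b 0 ^ 2 + b 1 ^ 2 + b 2 ^ 2 = 1 := by
    have := real_inner_self_eq_norm_sq b
    rw [hb] at this
    simp only [PiLp.inner_apply, RCLike.inner_apply, conj_trivial, Fin.sum_univ_three] at this
    linear_combination this
  have hC : c 0 ^ 2 + c 1 ^ 2 + c 2 ^ 2 = 1 := by
    have := real_inner_self_eq_norm_sq c
    rw [hc] at this
    simp only [PiLp.inner_apply, RCLike.inner_apply, conj_trivial, Fin.sum_univ_three] at this
    linear_combination this
  have hub : Real.sin (sphDist a b) = ‖tproj a b‖ := by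
    rw [sphDist, Real.sin_arccos, norm_eq_sqrt_real_inner]
    congr 1
    simp only [tproj, PiLp.inner_apply, inner_sub_left, inner_sub_right, inner_smul_left,
      inner_smul_right, RCLike.inner_apply, conj_trivial, Fin.sum_univ_three, PiLp.sub_apply,
      PiLp.smul_apply, smul_eq_mul]
    linear_combination (-(1:ℝ)) * hB - (a 0 * b 0 + a 1 * b 1 + a 2 * b 2) ^ 2 * hA
  have huc : Real.sin (sphDist a c) = ‖tproj a c‖ := by
    rw [sphDist, Real.sin_arccos, norm_eq_sqrt_real_inner]
    congr 1
    simp only [tproj, PiLp.inner_apply, inner_sub_left, inner_sub_right, inner_smul_left,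
      inner_smul_right, RCLike.inner_apply, conj_trivial, Fin.sum_univ_three, PiLp.sub_apply,
      PiLp.smul_apply, smul_eq_mul]
    linear_combination (-(1:ℝ)) * hC - (a 0 * c 0 + a 1 * c 1 + a 2 * c 2) ^ 2 * hA
  rw [hub, huc, sphAngle, mul_assoc,
    InnerProductGeometry.sin_angle_mul_norm_mul_norm (tproj a b) (tproj a c),
    ← Real.sqrt_sq_eq_abs]
  congr 1
  have hdet : det3 a b c =
      a 0 * (b 1 * c 2 - b 2 * c 1) - a 1 * (b 0 * c 2 - b 2 * c 0)
        + a 2 * (b 0 * c 1 - b 1 * c 0) := by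
    simp [det3, Matrix.det_fin_three]; ring
  rw [hdet]
  simp only [tproj, PiLp.inner_apply,
    RCLike.inner_apply, conj_trivial, Fin.sum_univ_three, PiLp.sub_apply, PiLp.smul_apply,
    smul_eq_mul]
  linear_combination ((b 0 ^ 2 + b 1 ^ 2 + b 2 ^ 2) * (c 0 ^ 2 + c 1 ^ 2 + c 2 ^ 2)
    - (b 0 * c 0 + b 1 * c 1 + b 2 * c 2) ^ 2
    - (a 0 * b 0 + a 1 * b 1 + a 2 * b 2) ^ 2 * (c 0 ^ 2 + c 1 ^ 2 + c 2 ^ 2)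
    - (a 0 * c 0 + a 1 * c 1 + a 2 * c 2) ^ 2 * (b 0 ^ 2 + b 1 ^ 2 + b 2 ^ 2)
    + 2 * (a 0 * b 0 + a 1 * b 1 + a 2 * b 2) * (a 0 * c 0 + a 1 * c 1 + a 2 * c 2)
      * (b 0 * c 0 + b 1 * c 1 + b 2 * c 2)) * hA
end

section
/- Spherical Law of Sines: Let a, b, c be unit vectors in Euclidean 3-space that are pairwise neither equal nor antipodal (b ≠ ±a, c ≠ ±a, c ≠ ±b). Then sin(∠_a(b,c)) · sin(dS(a,b)) · sin(dS(a,c)) = sin(∠_b(a,c)) · sin(dS(b,a)) · sin(dS(b,c)). Equivalently, since the sines of the pairwise spherical distances are nonzero, sin(∠_a(b,c)) / sin(dS(b,c)) = sin(∠_b(a,c)) / sin(dS(a,c)). -/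
open RealInnerProductSpace

lemma sq_inner_lt_one {x y : EuclideanSpace ℝ (Fin 3)}
    (hx : ‖x‖ = 1) (hy : ‖y‖ = 1) (h1 : y ≠ x) (h2 : y ≠ -x) :
    ⟪x, y⟫ ^ 2 < 1 := by
  have habs : |⟪x, y⟫| ≤ 1 := by
    simpa [hx, hy] using abs_real_inner_le_norm x y
  have hne1 : ⟪x, y⟫ ≠ 1 := fun h =>
    h1 ((inner_eq_one_iff_of_norm_eq_one hx hy).mp h).symm
  have hnem1 : ⟪x, y⟫ ≠ -1 := by
    intro h
    apply h2
    have hny : ‖-y‖ = 1 := by simpa using hy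
    have h' : ⟪x, -y⟫ = 1 := by
      rw [inner_neg_right, h]; norm_num
    have := (inner_eq_one_iff_of_norm_eq_one hx hny).mp h'
    rw [this]; simp
  have hlt : |⟪x, y⟫| < 1 := by
    rcases lt_or_eq_of_le habs with h | h
    · exact h
    · rcases (abs_eq (by norm_num : (0:ℝ) ≤ 1)).mp h with h | h
      exacts [absurd h hne1, absurd h hnem1]
  nlinarith [abs_nonneg ⟪x, y⟫, sq_abs ⟪x, y⟫]

lemma tproj_inner (a b c : EuclideanSpace ℝ (Fin 3)) (ha : ‖a‖ = 1) :
    ⟪tproj a b, tproj a c⟫ = ⟪b, c⟫ - ⟪b, a⟫ * ⟪c, a⟫ := by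
  have haa : ⟪a, a⟫ = (1 : ℝ) := by
    rw [real_inner_self_eq_norm_mul_norm, ha]; norm_num
  simp only [tproj, inner_sub_left, inner_sub_right, real_inner_smul_left,
    real_inner_smul_right, haa, mul_one]
  rw [real_inner_comm a c]
  ring

lemma tproj_norm (a b : EuclideanSpace ℝ (Fin 3)) (ha : ‖a‖ = 1) (hb : ‖b‖ = 1) :
    ‖tproj a b‖ = Real.sqrt (1 - ⟪a, b⟫ ^ 2) := by
  have hbb : ⟪b, b⟫ = (1 : ℝ) := by
    rw [real_inner_self_eq_norm_mul_norm, hb]; norm_num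
  rw [norm_eq_sqrt_real_inner, tproj_inner a b b ha, hbb, real_inner_comm a b]
  ring_nf

lemma sin_sphDist (x y : EuclideanSpace ℝ (Fin 3)) :
    Real.sin (sphDist x y) = Real.sqrt (1 - ⟪x, y⟫ ^ 2) := by
  rw [sphDist, Real.sin_arccos]

lemma key (a b c : EuclideanSpace ℝ (Fin 3)) (ha : ‖a‖ = 1) (hb : ‖b‖ = 1) (hc : ‖c‖ = 1) :
    Real.sin (sphAngle a b c) * Real.sin (sphDist a b) * Real.sin (sphDist a c) =
      Real.sqrt (1 - ⟪a, b⟫ ^ 2 - ⟪a, c⟫ ^ 2 - ⟪b, c⟫ ^ 2 + 2 * ⟪a, b⟫ * ⟪a, c⟫ * ⟪b, c⟫) := by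
  have h1 : Real.sin (sphDist a b) = ‖tproj a b‖ := by
    rw [sin_sphDist, tproj_norm a b ha hb]
  have h2 : Real.sin (sphDist a c) = ‖tproj a c‖ := by
    rw [sin_sphDist, tproj_norm a c ha hc]
  rw [h1, h2, mul_assoc, sphAngle, InnerProductGeometry.sin_angle_mul_norm_mul_norm,
    tproj_inner a b b ha, tproj_inner a c c ha, tproj_inner a b c ha]
  have hbb : ⟪b, b⟫ = (1 : ℝ) := by
    rw [real_inner_self_eq_norm_mul_norm, hb]; norm_num
  have hcc : ⟪c, c⟫ = (1 : ℝ) := by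
    rw [real_inner_self_eq_norm_mul_norm, hc]; norm_num
  rw [hbb, hcc, real_inner_comm b a, real_inner_comm c a]
  congr 1
  ring

/-- The spherical Law of Sines. -/
theorem spherical_law_of_sines (a b c : EuclideanSpace ℝ (Fin 3))
    (ha : ‖a‖ = 1) (hb : ‖b‖ = 1) (hc : ‖c‖ = 1)
    (hba : b ≠ a) (hba' : b ≠ -a) (hca : c ≠ a) (hca' : c ≠ -a)
    (hcb : c ≠ b) (hcb' : c ≠ -b) :
    Real.sin (sphAngle a b c) * Real.sin (sphDist a b) * Real.sin (sphDist a c) =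
      Real.sin (sphAngle b a c) * Real.sin (sphDist b a) * Real.sin (sphDist b c) ∧
    Real.sin (sphAngle a b c) / Real.sin (sphDist b c) =
      Real.sin (sphAngle b a c) / Real.sin (sphDist a c) := by
  have heq : Real.sin (sphAngle a b c) * Real.sin (sphDist a b) * Real.sin (sphDist a c) =
      Real.sin (sphAngle b a c) * Real.sin (sphDist b a) * Real.sin (sphDist b c) := by
    rw [key a b c ha hb hc, key b a c hb ha hc, real_inner_comm b a]
    congr 1
    ring
  refine ⟨heq, ?_⟩
  have hab2 : ⟪a, b⟫ ^ 2 < 1 := sq_inner_lt_one ha hb hba hba'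
  have hac2 : ⟪a, c⟫ ^ 2 < 1 := sq_inner_lt_one ha hc hca hca'
  have hbc2 : ⟪b, c⟫ ^ 2 < 1 := sq_inner_lt_one hb hc hcb hcb'
  have hsab : 0 < Real.sin (sphDist a b) := by
    rw [sin_sphDist]; exact Real.sqrt_pos.mpr (by linarith)
  have hsac : 0 < Real.sin (sphDist a c) := by
    rw [sin_sphDist]; exact Real.sqrt_pos.mpr (by linarith)
  have hsbc : 0 < Real.sin (sphDist b c) := by
    rw [sin_sphDist]; exact Real.sqrt_pos.mpr (by linarith)
  have hsba : Real.sin (sphDist b a) = Real.sin (sphDist a b) := by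
    rw [sphDist, sphDist, real_inner_comm]
  rw [hsba] at heq
  rw [div_eq_div_iff hsbc.ne' hsac.ne']
  have h' : (Real.sin (sphAngle a b c) * Real.sin (sphDist a c)) * Real.sin (sphDist a b)
      = (Real.sin (sphAngle b a c) * Real.sin (sphDist b c)) * Real.sin (sphDist a b) := by
    linear_combination heq
  exact mul_right_cancel₀ hsab.ne' h'
end

section
/- Let o, u, v be unit vectors in Euclidean 3-space with u ≠ o, u ≠ -o, v ≠ o, v ≠ -o. Then sin(∠_o(u,v)) · sin(dS(o,v)) ≤ sin(dS(u,v)). -/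
open RealInnerProductSpace

theorem sin_angle_mul_sin_dist_le (o u v : EuclideanSpace ℝ (Fin 3))
    (ho : ‖o‖ = 1) (hu : ‖u‖ = 1) (hv : ‖v‖ = 1)
    (huo : u ≠ o) (huo' : u ≠ -o) (hvo : v ≠ o) (hvo' : v ≠ -o) :
    Real.sin (sphAngle o u v) * Real.sin (sphDist o v) ≤ Real.sin (sphDist u v) := by
  have hoo : ⟪o, o⟫ = (1:ℝ) := by
    rw [real_inner_self_eq_norm_sq, ho]; norm_num
  have huu : ⟪u, u⟫ = (1:ℝ) := by
    rw [real_inner_self_eq_norm_sq, hu]; norm_num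
  have hvv : ⟪v, v⟫ = (1:ℝ) := by
    rw [real_inner_self_eq_norm_sq, hv]; norm_num
  have hPP : ⟪tproj o u, tproj o u⟫ = 1 - ⟪u, o⟫^2 := by
    simp only [tproj, inner_sub_left, inner_sub_right, real_inner_smul_left,
      real_inner_smul_right, hoo, real_inner_comm o u, huu]
    ring
  have hQQ : ⟪tproj o v, tproj o v⟫ = 1 - ⟪v, o⟫^2 := by
    simp only [tproj, inner_sub_left, inner_sub_right, real_inner_smul_left,
      real_inner_smul_right, hoo, real_inner_comm o v, hvv]
    ring
  have hPQ : ⟪tproj o u, tproj o v⟫ = ⟪u, v⟫ - ⟪u, o⟫ * ⟪v, o⟫ := by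
    simp only [tproj, inner_sub_left, inner_sub_right, real_inner_smul_left,
      real_inner_smul_right, hoo, real_inner_comm o v]
    ring
  -- bounds on inner products
  have hA : ⟪u, o⟫^2 < 1 := by
    have h1 : |⟪u, o⟫| ≤ 1 := by
      have := abs_real_inner_le_norm u o
      rwa [hu, ho, one_mul] at this
    have hne1 : ⟪u, o⟫ ≠ 1 := fun h => huo ((inner_eq_one_iff_of_norm_eq_one hu ho).mp h)
    have hnem1 : ⟪u, o⟫ ≠ -1 := by
      intro h
      apply huo'
      have : ⟪u, -o⟫ = (1:ℝ) := by rw [inner_neg_right, h]; ring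
      exact (inner_eq_one_iff_of_norm_eq_one hu (by rw [norm_neg, ho])).mp this
    have : |⟪u, o⟫| < 1 := lt_of_le_of_ne h1 (by
      intro h; rcases abs_eq (by norm_num : (0:ℝ) ≤ 1) |>.mp h with h | h
      exacts [hne1 h, hnem1 h])
    calc ⟪u, o⟫^2 = |⟪u, o⟫|^2 := (sq_abs _).symm
    _ < 1 := pow_lt_one₀ (abs_nonneg _) this two_ne_zero
  have hB : ⟪v, o⟫^2 < 1 := by
    have h1 : |⟪v, o⟫| ≤ 1 := by
      have := abs_real_inner_le_norm v o
      rwa [hv, ho, one_mul] at this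
    have hne1 : ⟪v, o⟫ ≠ 1 := fun h => hvo ((inner_eq_one_iff_of_norm_eq_one hv ho).mp h)
    have hnem1 : ⟪v, o⟫ ≠ -1 := by
      intro h
      apply hvo'
      have : ⟪v, -o⟫ = (1:ℝ) := by rw [inner_neg_right, h]; ring
      exact (inner_eq_one_iff_of_norm_eq_one hv (by rw [norm_neg, ho])).mp this
    have : |⟪v, o⟫| < 1 := lt_of_le_of_ne h1 (by
      intro h; rcases abs_eq (by norm_num : (0:ℝ) ≤ 1) |>.mp h with h | h
      exacts [hne1 h, hnem1 h])
    calc ⟪v, o⟫^2 = |⟪v, o⟫|^2 := (sq_abs _).symm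
    _ < 1 := pow_lt_one₀ (abs_nonneg _) this two_ne_zero
  have hC : ⟪u, v⟫^2 ≤ 1 := by
    have := abs_real_inner_le_norm u v
    rw [hu, hv, one_mul] at this
    nlinarith [abs_nonneg ⟪u, v⟫, sq_abs ⟪u, v⟫]
  -- norms of projections
  have hnP : ‖tproj o u‖ = Real.sqrt (1 - ⟪u, o⟫^2) := by
    rw [norm_eq_sqrt_real_inner, hPP]
  have hnQ : ‖tproj o v‖ = Real.sqrt (1 - ⟪v, o⟫^2) := by
    rw [norm_eq_sqrt_real_inner, hQQ]
  -- sin of distances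
  have hdov : Real.sin (sphDist o v) = Real.sqrt (1 - ⟪v, o⟫^2) := by
    rw [sphDist, Real.sin_arccos, real_inner_comm o v]
  have hduv : Real.sin (sphDist u v) = Real.sqrt (1 - ⟪u, v⟫^2) := by
    rw [sphDist, Real.sin_arccos]
  set a := ⟪u, o⟫
  set b := ⟪v, o⟫
  set c := ⟪u, v⟫
  -- sin of angle
  have hcos : Real.cos (sphAngle o u v) = (c - a*b) / (Real.sqrt (1-a^2) * Real.sqrt (1-b^2)) := by
    rw [sphAngle, InnerProductGeometry.cos_angle, hPQ, hnP, hnQ]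
  have hsin : Real.sin (sphAngle o u v) =
      Real.sqrt (1 - ((c - a*b) / (Real.sqrt (1-a^2) * Real.sqrt (1-b^2)))^2) := by
    rw [← hcos, Real.sin_eq_sqrt_one_sub_cos_sq]
    · exact InnerProductGeometry.angle_nonneg _ _
    · exact InnerProductGeometry.angle_le_pi _ _
  rw [hsin, hdov, hduv]
  have hA0 : (0:ℝ) < 1 - a^2 := by linarith
  have hB0 : (0:ℝ) < 1 - b^2 := by linarith
  have hsq : (Real.sqrt (1-a^2) * Real.sqrt (1-b^2))^2 = (1-a^2)*(1-b^2) := by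
    rw [mul_pow, Real.sq_sqrt hA0.le, Real.sq_sqrt hB0.le]
  rw [div_pow, hsq, ← Real.sqrt_mul' _ hB0.le]
  apply Real.sqrt_le_sqrt
  have key : (1 - (c - a*b)^2 / ((1-a^2)*(1-b^2))) * (1-b^2) = (1-b^2) - (c - a*b)^2/(1-a^2) := by
    field_simp
  rw [key]
  have h2 : (1 - b^2) - (1 - c^2) ≤ (c - a*b)^2 / (1 - a^2) := by
    rw [le_div_iff₀ hA0]
    nlinarith [sq_nonneg (b - a*c)]
  linarith
end

section
/- In the Burillo setup, fix r > 0, an open set U ⊆ A of diameter at most r with chosen point a_U ∈ U, and x ∈ p⁻¹(a_U). If y ∈ W_{U,x} and z ∈ p⁻¹(U) satisfies d(z,y) ≤ r, then z ∈ W_{U,x}. Consequently, W_{U,x} is an open subset of X. -/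
/-- In the Burillo setup, the set `W_{U,x}` (formed with parameter `r`): all points `y`
mapping into `U` such that some `y'` in the fiber over `a_U` satisfies `d(y,y') ≤ r`
and `δ_{a_U}(y',x) ≤ 3rL`. -/
def burilloW {X A : Type*} [MetricSpace X] (p : X → A) (δ : A → X → X → ℝ)
    (L r : ℝ) (U : Set A) (aU : A) (x : X) : Set X :=
  {y | p y ∈ U ∧ ∃ y', p y' = aU ∧ dist y y' ≤ r ∧ δ aU y' x ≤ 3 * r * L}

theorem burilloW_claim1 {X A : Type*} [MetricSpace X] [MetricSpace A]
    (p : X → A) (hp : Continuous p)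
    (hlift : ∀ (a : A) (x : X), ∃ y, p y = a ∧ dist x y = dist (p x) a)
    (L : ℝ) (hL : 1 ≤ L) (δ : A → X → X → ℝ)
    (hδsymm : ∀ a x y, p x = a → p y = a → δ a x y = δ a y x)
    (hδzero : ∀ a x y, p x = a → p y = a → (δ a x y = 0 ↔ x = y))
    (hδultra : ∀ a x y z, p x = a → p y = a → p z = a →
      δ a x z ≤ max (δ a x y) (δ a y z))
    (hδdist : ∀ a x y, p x = a → p y = a →
      dist x y ≤ δ a x y ∧ δ a x y ≤ L * dist x y)
    (r : ℝ) (hr : 0 < r) (U : Set A) (hUopen : IsOpen U)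
    (hUdiam : ∀ a ∈ U, ∀ a' ∈ U, dist a a' ≤ r)
    (aU : A) (haU : aU ∈ U) (x : X) (hx : p x = aU) :
    (∀ y ∈ burilloW p δ L r U aU x, ∀ z : X, p z ∈ U → dist z y ≤ r →
      z ∈ burilloW p δ L r U aU x) ∧
    IsOpen (burilloW p δ L r U aU x) := by
  have claim : ∀ y ∈ burilloW p δ L r U aU x, ∀ z : X, p z ∈ U → dist z y ≤ r →
      z ∈ burilloW p δ L r U aU x := by
    rintro y ⟨hyU, y', hy'p, hyy', hy'x⟩ z hzU hzy
    obtain ⟨z', hz'p, hzz'⟩ := hlift aU z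
    have hzz'r : dist z z' ≤ r := hzz'.le.trans (hUdiam _ hzU _ haU)
    refine ⟨hzU, z', hz'p, hzz'r, ?_⟩
    have h1 : δ aU z' y' ≤ L * dist z' y' := (hδdist aU z' y' hz'p hy'p).2
    have h2 : dist z' y' ≤ dist z' z + dist z y + dist y y' := dist_triangle4 z' z y y'
    have h3 : dist z' z ≤ r := by rw [dist_comm]; exact hzz'r
    have hmax : δ aU z' x ≤ max (δ aU z' y') (δ aU y' x) :=
      hδultra aU z' y' x hz'p hy'p hx
    have hzy' : δ aU z' y' ≤ 3 * r * L := by nlinarith [dist_nonneg (x := z') (y := y')]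
    exact hmax.trans (max_le hzy' hy'x)
  refine ⟨claim, ?_⟩
  rw [Metric.isOpen_iff]
  intro y hy
  obtain ⟨ε, hε, hε'⟩ := Metric.isOpen_iff.mp (hUopen.preimage hp) y hy.1
  refine ⟨min ε r, by positivity, fun z hz => ?_⟩
  have hz1 : p z ∈ U := hε' (Metric.mem_ball.mpr (lt_of_lt_of_le (Metric.mem_ball.mp hz) (min_le_left _ _)))
  exact claim y hy z hz1 (le_of_lt (lt_of_lt_of_le (Metric.mem_ball.mp hz) (min_le_right _ _)))
end

section
/- In the Burillo setup, fix r > 0 and an open set U ⊆ A of diameter at most r with chosen point a_U ∈ U, and let x, z ∈ p⁻¹(a_U). If W_{U,x} ∩ W_{U,z} ≠ ∅, then W_{U,x} = W_{U,z}. -/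
theorem burilloW_claim4 {X A : Type*} [MetricSpace X] [MetricSpace A]
    (p : X → A) (hp : Continuous p)
    (hlift : ∀ (a : A) (x : X), ∃ y, p y = a ∧ dist x y = dist (p x) a)
    (L : ℝ) (hL : 1 ≤ L) (δ : A → X → X → ℝ)
    (hδsymm : ∀ a x y, p x = a → p y = a → δ a x y = δ a y x)
    (hδzero : ∀ a x y, p x = a → p y = a → (δ a x y = 0 ↔ x = y))
    (hδultra : ∀ a x y z, p x = a → p y = a → p z = a →
      δ a x z ≤ max (δ a x y) (δ a y z))
    (hδdist : ∀ a x y, p x = a → p y = a →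
      dist x y ≤ δ a x y ∧ δ a x y ≤ L * dist x y)
    (r : ℝ) (hr : 0 < r) (U : Set A) (hUopen : IsOpen U)
    (hUdiam : ∀ a ∈ U, ∀ a' ∈ U, dist a a' ≤ r)
    (aU : A) (haU : aU ∈ U) (x z : X) (hx : p x = aU) (hz : p z = aU)
    (hne : burilloW p δ L r U aU x ∩ burilloW p δ L r U aU z ≠ ∅) :
    burilloW p δ L r U aU x = burilloW p δ L r U aU z := by
  obtain ⟨w, hw1, hw2⟩ := Set.nonempty_iff_ne_empty.mpr hne
  obtain ⟨hwU, w1, hw1a, hw1d, hw1δ⟩ := hw1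
  obtain ⟨-, w2, hw2a, hw2d, hw2δ⟩ := hw2
  have hd12 : dist w1 w2 ≤ 2 * r := by
    have := dist_triangle w1 w w2
    rw [dist_comm w1 w] at this
    linarith
  have hδ12 : δ aU w1 w2 ≤ 3 * r * L := by
    have h := (hδdist aU w1 w2 hw1a hw2a).2
    nlinarith
  have hδ1z : δ aU w1 z ≤ 3 * r * L :=
    le_trans (hδultra aU w1 w2 z hw1a hw2a hz) (max_le hδ12 hw2δ)
  have hxz : δ aU x z ≤ 3 * r * L := by
    refine le_trans (hδultra aU x w1 z hx hw1a hz) (max_le ?_ hδ1z)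
    rw [hδsymm aU x w1 hx hw1a]; exact hw1δ
  have hzx : δ aU z x ≤ 3 * r * L := by
    rw [hδsymm aU z x hz hx]; exact hxz
  ext y
  constructor
  · rintro ⟨hyU, y', hy'a, hy'd, hy'δ⟩
    exact ⟨hyU, y', hy'a, hy'd,
      le_trans (hδultra aU y' x z hy'a hx hz) (max_le hy'δ hxz)⟩
  · rintro ⟨hyU, y', hy'a, hy'd, hy'δ⟩
    exact ⟨hyU, y', hy'a, hy'd,
      le_trans (hδultra aU y' z x hy'a hz hx) (max_le hy'δ hzx)⟩
end

section
/- In the Burillo setup, fix r > 0 and a family 𝔘 of open subsets of A, each of diameter at most r, with a chosen point a_U ∈ U for each U ∈ 𝔘. Suppose (U_0,x_0), …, (U_m,x_m) are pairs with U_i ∈ 𝔘 and x_i ∈ p⁻¹(a_{U_i}) such that the sets W_{U_0,x_0}, …, W_{U_m,x_m} are pairwise distinct and have a common point y ∈ X. Then the open sets U_0, …, U_m are pairwise distinct and all contain p(y). -/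
theorem burilloW_claim5 {X A : Type*} [MetricSpace X] [MetricSpace A]
    (p : X → A) (hp : Continuous p)
    (hlift : ∀ (a : A) (x : X), ∃ y, p y = a ∧ dist x y = dist (p x) a)
    (L : ℝ) (hL : 1 ≤ L) (δ : A → X → X → ℝ)
    (hδsymm : ∀ a x y, p x = a → p y = a → δ a x y = δ a y x)
    (hδzero : ∀ a x y, p x = a → p y = a → (δ a x y = 0 ↔ x = y))
    (hδultra : ∀ a x y z, p x = a → p y = a → p z = a →
      δ a x z ≤ max (δ a x y) (δ a y z))
    (hδdist : ∀ a x y, p x = a → p y = a →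
      dist x y ≤ δ a x y ∧ δ a x y ≤ L * dist x y)
    (r : ℝ) (hr : 0 < r) (𝔘 : Set (Set A))
    (hopen : ∀ U ∈ 𝔘, IsOpen U)
    (hdiam : ∀ U ∈ 𝔘, ∀ a ∈ U, ∀ a' ∈ U, dist a a' ≤ r)
    (ch : Set A → A) (hch : ∀ U ∈ 𝔘, ch U ∈ U)
    (m : ℕ) (Us : Fin (m + 1) → Set A) (xs : Fin (m + 1) → X)
    (hUs : ∀ i, Us i ∈ 𝔘) (hxs : ∀ i, p (xs i) = ch (Us i))
    (hdistinct : ∀ i j, i ≠ j →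
      burilloW p δ L r (Us i) (ch (Us i)) (xs i) ≠
        burilloW p δ L r (Us j) (ch (Us j)) (xs j))
    (y : X) (hy : ∀ i, y ∈ burilloW p δ L r (Us i) (ch (Us i)) (xs i)) :
    (∀ i j, i ≠ j → Us i ≠ Us j) ∧ (∀ i, p y ∈ Us i) := by
  refine ⟨?_, fun i => (hy i).1⟩
  intro i j hij hUeq
  apply hdistinct i j hij
  rw [hUeq]
  set a := ch (Us j) with ha
  obtain ⟨_, yi, hpyi, hdyi, hδi⟩ := hy i
  obtain ⟨_, yj, hpyj, hdyj, hδj⟩ := hy j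
  rw [hUeq] at hpyi hδi
  have hpxi : p (xs i) = a := by rw [hxs i, hUeq]
  have hpxj : p (xs j) = a := hxs j
  have hrL : 0 < r * L := mul_pos hr (lt_of_lt_of_le one_pos hL)
  -- δ a yi yj ≤ 2rL ≤ 3rL
  have hyiyj : δ a yi yj ≤ 3 * r * L := by
    have h1 : dist yi yj ≤ 2 * r := by
      calc dist yi yj ≤ dist yi y + dist y yj := dist_triangle _ _ _
        _ ≤ r + r := add_le_add (by rwa [dist_comm]) hdyj
        _ = 2 * r := by ring
    calc δ a yi yj ≤ L * dist yi yj := (hδdist a yi yj hpyi hpyj).2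
      _ ≤ L * (2 * r) := by nlinarith [dist_nonneg (x := yi) (y := yj)]
      _ ≤ 3 * r * L := by nlinarith
  have hxixj : δ a (xs i) (xs j) ≤ 3 * r * L := by
    have h1 : δ a (xs i) yi = δ a yi (xs i) := hδsymm a (xs i) yi hpxi hpyi
    have h2 := hδultra a (xs i) yi (xs j) hpxi hpyi hpxj
    have h3 := hδultra a yi yj (xs j) hpyi hpyj hpxj
    have := le_trans h2 (max_le_max le_rfl h3)
    refine le_trans this ?_
    simp only [max_le_iff]
    exact ⟨by rw [h1]; exact hδi, hyiyj, hδj⟩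
  have hxjxi : δ a (xs j) (xs i) ≤ 3 * r * L := by
    rwa [hδsymm a (xs j) (xs i) hpxj hpxi]
  ext z
  simp only [burilloW, Set.mem_setOf_eq]
  constructor <;> rintro ⟨hz, z', hpz', hdz', hδz'⟩ <;> refine ⟨hz, z', hpz', hdz', ?_⟩
  · exact le_trans (hδultra a z' (xs i) (xs j) hpz' hpxi hpxj)
      (max_le hδz' hxixj)
  · exact le_trans (hδultra a z' (xs j) (xs i) hpz' hpxj hpxi)
      (max_le hδz' hxjxi)
end

section
/- Covering construction underlying Burillo's theorem: in the Burillo setup, let n ∈ ℕ and r > 0, and suppose 𝔘 is an open covering of A such that every member of 𝔘 has diameter at most r and every point of A lies in at most n+1 members of 𝔘. Then, choosing a point a_U ∈ U for each U ∈ 𝔘, the family 𝔚 = { W_{U,x} | U ∈ 𝔘, x ∈ p⁻¹(a_U) } is an open covering of X such that every member of 𝔚 has diameter at most r(2+3L) and every point of X lies in at most n+1 pairwise distinct members of 𝔚. -/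
lemma burilloW_subset {X A : Type*} [MetricSpace X] (p : X → A) (δ : A → X → X → ℝ)
    (L r : ℝ)
    (hδultra : ∀ a x y z, p x = a → p y = a → p z = a →
      δ a x z ≤ max (δ a x y) (δ a y z))
    (U : Set A) (aU : A) (x₁ x₂ : X) (hx₁ : p x₁ = aU) (hx₂ : p x₂ = aU)
    (h12 : δ aU x₁ x₂ ≤ 3 * r * L) :
    burilloW p δ L r U aU x₁ ⊆ burilloW p δ L r U aU x₂ := by
  rintro z ⟨hzU, z', hz', hdz, hδz⟩
  refine ⟨hzU, z', hz', hdz, ?_⟩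
  calc δ aU z' x₂ ≤ max (δ aU z' x₁) (δ aU x₁ x₂) := hδultra aU z' x₁ x₂ hz' hx₁ hx₂
    _ ≤ 3 * r * L := max_le hδz h12

lemma burilloW_eq {X A : Type*} [MetricSpace X] (p : X → A) (δ : A → X → X → ℝ)
    (L r : ℝ) (hL : 1 ≤ L) (hr : 0 < r)
    (hδsymm : ∀ a x y, p x = a → p y = a → δ a x y = δ a y x)
    (hδultra : ∀ a x y z, p x = a → p y = a → p z = a →
      δ a x z ≤ max (δ a x y) (δ a y z))
    (hδdist : ∀ a x y, p x = a → p y = a →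
      dist x y ≤ δ a x y ∧ δ a x y ≤ L * dist x y)
    (U : Set A) (aU : A) (x₁ x₂ : X) (hx₁ : p x₁ = aU) (hx₂ : p x₂ = aU)
    (y : X) (hy₁ : y ∈ burilloW p δ L r U aU x₁) (hy₂ : y ∈ burilloW p δ L r U aU x₂) :
    burilloW p δ L r U aU x₁ = burilloW p δ L r U aU x₂ := by
  obtain ⟨-, y₁, hy₁', hd₁, hδ₁⟩ := hy₁
  obtain ⟨-, y₂, hy₂', hd₂, hδ₂⟩ := hy₂
  have hL0 : (0:ℝ) ≤ L := le_trans zero_le_one hL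
  have h12 : δ aU x₁ x₂ ≤ 3 * r * L := by
    have hmid : δ aU y₁ y₂ ≤ 3 * r * L := by
      have h1 : δ aU y₁ y₂ ≤ L * dist y₁ y₂ := (hδdist aU y₁ y₂ hy₁' hy₂').2
      have h2 : dist y₁ y₂ ≤ dist y₁ y + dist y y₂ := dist_triangle _ _ _
      have h3 : dist y₁ y + dist y y₂ ≤ r + r := by
        rw [dist_comm y₁ y]; rw [dist_comm y y₂] at *; exact add_le_add hd₁ hd₂
      nlinarith
    have hA : δ aU x₁ y₁ ≤ 3 * r * L := by
      rw [hδsymm aU x₁ y₁ hx₁ hy₁']; exact hδ₁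
    calc δ aU x₁ x₂ ≤ max (δ aU x₁ y₁) (δ aU y₁ x₂) :=
          hδultra aU x₁ y₁ x₂ hx₁ hy₁' hx₂
      _ ≤ max (δ aU x₁ y₁) (max (δ aU y₁ y₂) (δ aU y₂ x₂)) := by
          exact max_le_max le_rfl (hδultra aU y₁ y₂ x₂ hy₁' hy₂' hx₂)
      _ ≤ 3 * r * L := max_le hA (max_le hmid hδ₂)
  have h21 : δ aU x₂ x₁ ≤ 3 * r * L := by
    rw [hδsymm aU x₂ x₁ hx₂ hx₁]; exact h12
  exact le_antisymm (burilloW_subset p δ L r hδultra U aU x₁ x₂ hx₁ hx₂ h12)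
    (burilloW_subset p δ L r hδultra U aU x₂ x₁ hx₂ hx₁ h21)

theorem burilloW_covering {X A : Type*} [MetricSpace X] [MetricSpace A]
    (p : X → A) (hp : Continuous p)
    (hlift : ∀ (a : A) (x : X), ∃ y, p y = a ∧ dist x y = dist (p x) a)
    (L : ℝ) (hL : 1 ≤ L) (δ : A → X → X → ℝ)
    (hδsymm : ∀ a x y, p x = a → p y = a → δ a x y = δ a y x)
    (hδzero : ∀ a x y, p x = a → p y = a → (δ a x y = 0 ↔ x = y))
    (hδultra : ∀ a x y z, p x = a → p y = a → p z = a →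
      δ a x z ≤ max (δ a x y) (δ a y z))
    (hδdist : ∀ a x y, p x = a → p y = a →
      dist x y ≤ δ a x y ∧ δ a x y ≤ L * dist x y)
    (n : ℕ) (r : ℝ) (hr : 0 < r) (𝔘 : Set (Set A))
    (hcover : ⋃₀ 𝔘 = Set.univ)
    (hopen : ∀ U ∈ 𝔘, IsOpen U)
    (hdiam : ∀ U ∈ 𝔘, ∀ a ∈ U, ∀ a' ∈ U, dist a a' ≤ r)
    (horder : ∀ a : A, {U | U ∈ 𝔘 ∧ a ∈ U}.encard ≤ (n + 1 : ℕ))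
    (ch : Set A → A) (hch : ∀ U ∈ 𝔘, ch U ∈ U) :
    let 𝔚 : Set (Set X) :=
      {S | ∃ U ∈ 𝔘, ∃ x : X, p x = ch U ∧ S = burilloW p δ L r U (ch U) x}
    (∀ S ∈ 𝔚, IsOpen S) ∧
    ⋃₀ 𝔚 = Set.univ ∧
    (∀ S ∈ 𝔚, ∀ y ∈ S, ∀ z ∈ S, dist y z ≤ r * (2 + 3 * L)) ∧
    (∀ y : X, {S | S ∈ 𝔚 ∧ y ∈ S}.encard ≤ (n + 1 : ℕ)) := by
  intro 𝔚
  have hL0 : (0:ℝ) ≤ L := le_trans zero_le_one hL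
  refine ⟨?_, ?_, ?_, ?_⟩
  · -- openness
    rintro S ⟨U, hU, x, hx, rfl⟩
    rw [Metric.isOpen_iff]
    rintro y ⟨hyU, y', hy', hdy, hδy⟩
    have hopre : IsOpen (p ⁻¹' U) := (hopen U hU).preimage hp
    obtain ⟨ε₀, hε₀, hball⟩ := Metric.isOpen_iff.mp hopre y hyU
    refine ⟨min ε₀ r, lt_min hε₀ hr, fun z hz => ?_⟩
    have hzU : p z ∈ U := hball (Metric.ball_subset_ball (min_le_left _ _) hz)
    obtain ⟨z', hz', hdz'⟩ := hlift (ch U) z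
    have hdzz' : dist z z' ≤ r := by
      rw [hdz']; exact hdiam U hU (p z) hzU (ch U) (hch U hU)
    refine ⟨hzU, z', hz', hdzz', ?_⟩
    have hδz'y' : δ (ch U) z' y' ≤ 3 * r * L := by
      have h1 : δ (ch U) z' y' ≤ L * dist z' y' := (hδdist _ z' y' hz' hy').2
      have h2 : dist z' y' ≤ dist z' z + dist z y + dist y y' := dist_triangle4 _ _ _ _
      have h3 : dist z' z ≤ r := by rw [dist_comm]; exact hdzz'
      have h4 : dist z y ≤ r := le_of_lt (lt_of_lt_of_le (Metric.mem_ball.mp hz) (min_le_right _ _))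
      have h5 : dist y y' ≤ r := hdy
      nlinarith
    calc δ (ch U) z' x ≤ max (δ (ch U) z' y') (δ (ch U) y' x) :=
          hδultra _ z' y' x hz' hy' hx
      _ ≤ 3 * r * L := max_le hδz'y' hδy
  · -- covering
    rw [Set.eq_univ_iff_forall]
    intro y
    have : p y ∈ ⋃₀ 𝔘 := by rw [hcover]; trivial
    obtain ⟨U, hU, hyU⟩ := this
    obtain ⟨y', hy', hdy'⟩ := hlift (ch U) y
    have hdyy' : dist y y' ≤ r := by
      rw [hdy']; exact hdiam U hU (p y) hyU (ch U) (hch U hU)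
    refine ⟨burilloW p δ L r U (ch U) y', ⟨U, hU, y', hy', rfl⟩, hyU, y', hy', hdyy', ?_⟩
    have : δ (ch U) y' y' = 0 := (hδzero _ y' y' hy' hy').mpr rfl
    rw [this]; positivity
  · -- diameter
    rintro S ⟨U, hU, x, hx, rfl⟩ y ⟨-, y', hy', hdy, hδy⟩ z ⟨-, z', hz', hdz, hδz⟩
    have hyz' : dist y' z' ≤ 3 * r * L := by
      refine le_trans (hδdist _ y' z' hy' hz').1 ?_
      calc δ (ch U) y' z' ≤ max (δ (ch U) y' x) (δ (ch U) x z') :=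
            hδultra _ y' x z' hy' hx hz'
        _ ≤ 3 * r * L := by
            refine max_le hδy ?_
            rw [hδsymm _ x z' hx hz']; exact hδz
    calc dist y z ≤ dist y y' + dist y' z' + dist z' z := dist_triangle4 _ _ _ _
      _ ≤ r + 3 * r * L + r := by
          refine add_le_add (add_le_add hdy hyz') ?_
          rw [dist_comm]; exact hdz
      _ = r * (2 + 3 * L) := by ring
  · -- multiplicity
    intro y
    have key : ∀ S ∈ {S | S ∈ 𝔚 ∧ y ∈ S},
        ∃ U ∈ 𝔘, p y ∈ U ∧ ∃ x, p x = ch U ∧ S = burilloW p δ L r U (ch U) x := by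
      rintro S ⟨⟨U, hU, x, hx, rfl⟩, hyS⟩
      exact ⟨U, hU, hyS.1, x, hx, rfl⟩
    classical
    set f : Set X → Set A := fun S =>
      if h : ∃ U ∈ 𝔘, p y ∈ U ∧ ∃ x, p x = ch U ∧ S = burilloW p δ L r U (ch U) x
      then h.choose else ∅ with hf
    refine le_trans (Set.encard_le_encard_of_injOn (f := f)
      (t := {U | U ∈ 𝔘 ∧ p y ∈ U}) ?_ ?_) (horder (p y))
    · intro S hS
      have h := key S hS
      rw [hf]; simp only [dif_pos h]
      exact ⟨h.choose_spec.1, h.choose_spec.2.1⟩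
    · intro S₁ hS₁ S₂ hS₂ hfeq
      have h₁ := key S₁ hS₁
      have h₂ := key S₂ hS₂
      have e₁ : f S₁ = h₁.choose := by rw [hf]; simp only [dif_pos h₁]
      have e₂ : f S₂ = h₂.choose := by rw [hf]; simp only [dif_pos h₂]
      obtain ⟨hU₁, -, x₁, hx₁, hS₁eq⟩ := h₁.choose_spec
      obtain ⟨hU₂, -, x₂, hx₂, hS₂eq⟩ := h₂.choose_spec
      have hUeq : h₁.choose = h₂.choose := by rw [← e₁, ← e₂, hfeq]
      rw [hS₁eq, hS₂eq]
      rw [hUeq] at hx₁ hS₁eq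
      rw [hUeq]
      rw [hS₁eq] at hS₁
      rw [hS₂eq] at hS₂
      exact burilloW_eq p δ L r hL hr hδsymm hδultra hδdist _ _ x₁ x₂ hx₁ hx₂ y hS₁.2 hS₂.2
end

section
/- Refinement claim in Burillo's theorem: in the Burillo setup, let r > 0 and let 0 < r' ≤ r/(2+3L). Let 𝔘 and 𝔙 be families of open subsets of A with chosen points a_U ∈ U (U ∈ 𝔘) and a_V ∈ V (V ∈ 𝔙), such that every member of 𝔘 has diameter at most r, every member of 𝔙 has diameter at most r', and 𝔙 refines 𝔘 (every V ∈ 𝔙 is contained in some U ∈ 𝔘). Then for every V ∈ 𝔙 and every v ∈ p⁻¹(a_V) there exist U ∈ 𝔘 with V ⊆ U and x ∈ p⁻¹(a_U) such that W'_{V,v} ⊆ W_{U,x}, where W'_{V,v} is formed with parameter r' and W_{U,x} is formed with parameter r. -/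
theorem burilloW_refines {X A : Type*} [MetricSpace X] [MetricSpace A]
    (p : X → A) (hp : Continuous p)
    (hlift : ∀ (a : A) (x : X), ∃ y, p y = a ∧ dist x y = dist (p x) a)
    (L : ℝ) (hL : 1 ≤ L) (δ : A → X → X → ℝ)
    (hδsymm : ∀ a x y, p x = a → p y = a → δ a x y = δ a y x)
    (hδzero : ∀ a x y, p x = a → p y = a → (δ a x y = 0 ↔ x = y))
    (hδultra : ∀ a x y z, p x = a → p y = a → p z = a →
      δ a x z ≤ max (δ a x y) (δ a y z))
    (hδdist : ∀ a x y, p x = a → p y = a →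
      dist x y ≤ δ a x y ∧ δ a x y ≤ L * dist x y)
    (r r' : ℝ) (hr : 0 < r) (hr' : 0 < r') (hr'le : r' ≤ r / (2 + 3 * L))
    (𝔘 𝔙 : Set (Set A))
    (hUopen : ∀ U ∈ 𝔘, IsOpen U) (hVopen : ∀ V ∈ 𝔙, IsOpen V)
    (ch : Set A → A) (hchU : ∀ U ∈ 𝔘, ch U ∈ U) (hchV : ∀ V ∈ 𝔙, ch V ∈ V)
    (hUdiam : ∀ U ∈ 𝔘, ∀ a ∈ U, ∀ a' ∈ U, dist a a' ≤ r)
    (hVdiam : ∀ V ∈ 𝔙, ∀ a ∈ V, ∀ a' ∈ V, dist a a' ≤ r')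
    (hrefine : ∀ V ∈ 𝔙, ∃ U ∈ 𝔘, V ⊆ U) :
    ∀ V ∈ 𝔙, ∀ v : X, p v = ch V →
      ∃ U ∈ 𝔘, V ⊆ U ∧ ∃ x : X, p x = ch U ∧
        burilloW p δ L r' V (ch V) v ⊆ burilloW p δ L r U (ch U) x := by
  intro V hV v hv
  obtain ⟨U, hU, hVU⟩ := hrefine V hV
  obtain ⟨x, hx, hxd⟩ := hlift (ch U) v
  refine ⟨U, hU, hVU, x, hx, ?_⟩
  intro y hy
  obtain ⟨hyV, y', hy', hyy', hδy'⟩ := hy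
  obtain ⟨y'', hy'', hyy''⟩ := hlift (ch U) y
  have hL0 : (0:ℝ) < 2 + 3 * L := by linarith
  have hr'r : r' * (2 + 3 * L) ≤ r := by
    calc r' * (2 + 3 * L) ≤ (r / (2 + 3 * L)) * (2 + 3 * L) := by
          exact mul_le_mul_of_nonneg_right hr'le hL0.le
      _ = r := by field_simp
  have hpyU : p y ∈ U := hVU hyV
  have hd1 : dist y y'' ≤ r := by
    rw [hyy'']; exact hUdiam U hU _ hpyU _ (hchU U hU)
  refine ⟨hpyU, y'', hy'', hd1, ?_⟩
  have hdvx : dist v x ≤ r := by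
    rw [hxd, hv]; exact hUdiam U hU _ (hVU (hchV V hV)) _ (hchU U hU)
  have hdy'v : dist y' v ≤ 3 * r' * L := le_trans (hδdist (ch V) y' v hy' hv).1 hδy'
  have hδle : δ (ch U) y'' x ≤ L * dist y'' x := (hδdist (ch U) y'' x hy'' hx).2
  have hdtri : dist y'' x ≤ dist y'' y + dist y y' + dist y' v + dist v x := by
    have := dist_triangle4 y'' y y' v
    have h2 := dist_triangle y'' v x
    linarith
  have hd1' : dist y'' y ≤ r := by rw [dist_comm]; exact hd1
  have : dist y'' x ≤ 2 * r + r' * (1 + 3 * L) := by nlinarith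
  calc δ (ch U) y'' x ≤ L * dist y'' x := hδle
    _ ≤ L * (2 * r + r' * (1 + 3 * L)) := by
        exact mul_le_mul_of_nonneg_left this (by linarith)
    _ ≤ 3 * r * L := by nlinarith
end

section
/- In the metric space ((−1,1) × ℝ, d), where d is the tree distance, there is no isometric embedding φ : ℝ → (−1,1) × ℝ (i.e. no map with d(φ(s),φ(t)) = |s − t| for all s,t ∈ ℝ) whose image contains the segment (−1,1) × {0}. -/
/-- The tree distance on `ℝ × ℝ`. -/
noncomputable def treeDist (p q : ℝ × ℝ) : ℝ :=
  if p.1 = q.1 then |p.2 - q.2| else |p.2| + |p.1 - q.1| + |q.2|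

lemma treeDist_horiz (x x' : ℝ) : treeDist (x, 0) (x', 0) = |x - x'| := by
  unfold treeDist
  by_cases h : x = x' <;> simp [h]

theorem no_isometric_line_through_open_segment :
    ¬∃ φ : ℝ → ℝ × ℝ,
      (∀ t : ℝ, φ t ∈ Set.Ioo (-1 : ℝ) 1 ×ˢ (Set.univ : Set ℝ)) ∧
      (∀ s t : ℝ, treeDist (φ s) (φ t) = |s - t|) ∧
      Set.Ioo (-1 : ℝ) 1 ×ˢ ({0} : Set ℝ) ⊆ Set.range φ := by
  rintro ⟨φ, hmem, hiso, hsub⟩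
  have hex : ∀ x : ℝ, -1 < x → x < 1 → ∃ t, φ t = (x, 0) := by
    intro x h1 h2
    exact hsub ⟨⟨h1, h2⟩, rfl⟩
  obtain ⟨t0, ht0⟩ := hex 0 (by norm_num) (by norm_num)
  obtain ⟨t1, ht1⟩ := hex (1/2) (by norm_num) (by norm_num)
  have h01 : |t1 - t0| = 1/2 := by
    have h := hiso t1 t0
    rw [ht0, ht1, treeDist_horiz] at h
    rw [← h]; norm_num
  -- parameters of the segment points are affine: t(x) = t0 + ε*x
  have hparam : ∀ ε : ℝ, (ε = 1 ∨ ε = -1) → t1 - t0 = ε / 2 →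
      ∀ x : ℝ, 0 < x → x < 1 → φ (t0 + ε * x) = (x, 0) := by
    intro ε hε ht1' x hx1 hx2
    obtain ⟨tx, htx⟩ := hex x (by linarith) hx2
    have e0 : |tx - t0| = x := by
      have h := hiso tx t0
      rw [ht0, htx, treeDist_horiz] at h
      rw [← h]; rw [sub_zero, abs_of_pos hx1]
    have e1 : |tx - t1| = |x - 1/2| := by
      have h := hiso tx t1
      rw [ht1, htx, treeDist_horiz] at h
      exact h.symm
    have hlt : |x - 1/2| < x + 1/2 := abs_lt.mpr ⟨by linarith, by linarith⟩
    rcases (abs_eq hx1.le).mp e0 with h | h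
    · rcases hε with rfl | rfl
      · rw [show t0 + 1 * x = tx by linarith, htx]
      · exfalso
        have : tx - t1 = x + 1/2 := by linarith
        rw [this, abs_of_pos (by linarith)] at e1
        linarith
    · rcases hε with rfl | rfl
      · exfalso
        have : tx - t1 = -(x + 1/2) := by linarith
        rw [this, abs_neg, abs_of_pos (by linarith)] at e1
        linarith
      · rw [show t0 + (-1) * x = tx by linarith, htx]
  have main : ∀ ε : ℝ, (ε = 1 ∨ ε = -1) → t1 - t0 = ε / 2 → False := by
    intro ε hε ht1'
    set p : ℝ := (φ (t0 + ε)).1 with hp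
    set q : ℝ := (φ (t0 + ε)).2 with hq
    have hpmem : -1 < p ∧ p < 1 := (hmem (t0 + ε)).1
    have key : ∀ x : ℝ, 0 < x → x < 1 → p < x → |q| + (x - p) = 1 - x := by
      intro x hx1 hx2 hpx
      have hφx := hparam ε hε ht1' x hx1 hx2
      have h := hiso (t0 + ε) (t0 + ε * x)
      rw [hφx] at h
      have hd : t0 + ε - (t0 + ε * x) = ε * (1 - x) := by ring
      rw [hd, abs_mul] at h
      have hεabs : |ε| = 1 := by rcases hε with rfl | rfl <;> norm_num
      rw [hεabs, one_mul, abs_of_pos (by linarith : (0:ℝ) < 1 - x)] at h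
      have hpq : φ (t0 + ε) = (p, q) := rfl
      rw [hpq] at h
      unfold treeDist at h
      rw [if_neg (ne_of_lt hpx)] at h
      simp only [abs_zero, add_zero] at h
      rw [abs_of_neg (by linarith : p - x < 0)] at h
      linarith
    have h1 := key ((p + 1) / 2) (by linarith [hpmem.1]) (by linarith [hpmem.2])
      (by linarith [hpmem.2])
    have h2 := key ((p + 3) / 4) (by linarith [hpmem.1]) (by linarith [hpmem.2])
      (by linarith [hpmem.2])
    linarith [hpmem.2]
  rcases (abs_eq (by norm_num : (0:ℝ) ≤ 1/2)).mp h01 with h | h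
  · exact main 1 (Or.inl rfl) (by linarith)
  · exact main (-1) (Or.inr rfl) (by linarith)
end
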